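/- Write ρ1 = A1·w + B1 and ρ2 = A2·w + B2 as polynomials in w, where A1 = −z³ + q910·z² + q710·z + q510, B1 = q1010·z⁶ + q810·z⁵ + q610·z⁴ + q410·z³ + q310·z² + q210·z + q110, A2 = (q99 − q91010)z² + (q79 − q71010)z + (q59 − q51010), B2 = −2z⁷ + (q910 − q101010 − λ10)z⁶ + (q89 − q81010)z⁵ + (q69 − q61010)z⁴ + (q49 − q41010)z³ + (q39 − q31010)z² + (q29 − q21010)z + (q19 − q11010). Then the resultant A1·B2 − A2·B1 of ρ1 and ρ2 with respect to w, viewed as a polynomial in z with coefficients in R, has degree exactly 10 and leading coefficient the constant 2. Consequently, for any commutative ring S, any ring homomorphism R → S, and any elements z, w ∈ S with ρ1(z,w) = 0 and ρ2(z,w) = 0, z is a root of the resulting degree-10 polynomial with constant leading coefficient 2. -/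
import Mathlib


open Polynomial

/- The coefficient ring is `R = MvPolynomial (Fin 30) ℤ`, with the indeterminates indexed as
follows:
 0 ↦ λ10,
 1 ↦ q110, 2 ↦ q210, 3 ↦ q310, 4 ↦ q410, 5 ↦ q510, 6 ↦ q610, 7 ↦ q710, 8 ↦ q810,
 9 ↦ q910, 10 ↦ q1010,
 11 ↦ q19, 12 ↦ q29, 13 ↦ q39, 14 ↦ q49, 15 ↦ q59, 16 ↦ q69, 17 ↦ q79, 18 ↦ q89, 19 ↦ q99,
 20 ↦ q11010, 21 ↦ q21010, 22 ↦ q31010, 23 ↦ q41010, 24 ↦ q51010, 25 ↦ q61010,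
 26 ↦ q71010, 27 ↦ q81010, 28 ↦ q91010, 29 ↦ q101010. -/

/-- The `i`-th indeterminate of `R`, viewed as a constant polynomial in `z`. -/
noncomputable def v (i : Fin 30) : Polynomial (MvPolynomial (Fin 30) ℤ) :=
  Polynomial.C (MvPolynomial.X i)

/-- `A1 = −z³ + q910·z² + q710·z + q510`, the coefficient of `w` in `ρ1`. -/
noncomputable def A1 : Polynomial (MvPolynomial (Fin 30) ℤ) :=
  -X ^ 3 + v 9 * X ^ 2 + v 7 * X + v 5

/-- `B1 = q1010·z⁶ + q810·z⁵ + q610·z⁴ + q410·z³ + q310·z² + q210·z + q110`. -/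
noncomputable def B1 : Polynomial (MvPolynomial (Fin 30) ℤ) :=
  v 10 * X ^ 6 + v 8 * X ^ 5 + v 6 * X ^ 4 + v 4 * X ^ 3 + v 3 * X ^ 2 + v 2 * X + v 1

/-- `A2 = (q99 − q91010)z² + (q79 − q71010)z + (q59 − q51010)`, the coefficient of `w` in `ρ2`. -/
noncomputable def A2 : Polynomial (MvPolynomial (Fin 30) ℤ) :=
  (v 19 - v 28) * X ^ 2 + (v 17 - v 26) * X + (v 15 - v 24)

/-- `B2 = −2z⁷ + (q910 − q101010 − λ10)z⁶ + (q89 − q81010)z⁵ + (q69 − q61010)z⁴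
  + (q49 − q41010)z³ + (q39 − q31010)z² + (q29 − q21010)z + (q19 − q11010)`. -/
noncomputable def B2 : Polynomial (MvPolynomial (Fin 30) ℤ) :=
  -2 * X ^ 7 + (v 9 - v 29 - v 0) * X ^ 6 + (v 18 - v 27) * X ^ 5 + (v 16 - v 25) * X ^ 4
    + (v 14 - v 23) * X ^ 3 + (v 13 - v 22) * X ^ 2 + (v 12 - v 21) * X + (v 11 - v 20)

/-- The resultant `A1·B2 − A2·B1` of `ρ1` and `ρ2` with respect to `w`, for the (3,11)-curve. -/
noncomputable def res311 : Polynomial (MvPolynomial (Fin 30) ℤ) := A1 * B2 - A2 * B1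

lemma hA1deg : A1.degree = 3 := by unfold A1 v; compute_degree!
lemma hB2deg : B2.degree = 7 := by unfold B2 v; compute_degree!
lemma hA2deg : A2.degree ≤ 2 := by unfold A2 v; compute_degree
lemma hB1deg : B1.degree ≤ 6 := by unfold B1 v; compute_degree
lemma hA1coeff : A1.coeff 3 = -1 := by unfold A1 v; simp [coeff_one, coeff_X]
lemma hB2coeff : B2.coeff 7 = -2 := by
  unfold B2 v
  simp only [coeff_add, coeff_C_mul, coeff_X_pow, coeff_sub, sub_mul, coeff_X, coeff_one]
  norm_num
  rw [show (7:ℕ) = 0 + 7 from rfl, coeff_mul_X_pow]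
  simp

lemma hmul311 : (A1 * B2).degree = 10 ∧ (A1 * B2).coeff 10 = 2 := by
  constructor
  · rw [degree_mul, hA1deg, hB2deg]; rfl
  · have := coeff_mul_degree_add_degree A1 B2
    have h1 : A1.natDegree = 3 := natDegree_eq_of_degree_eq_some hA1deg
    have h2 : B2.natDegree = 7 := natDegree_eq_of_degree_eq_some hB2deg
    rw [h1, h2] at this
    rw [show (10:ℕ) = 3 + 7 from rfl, this, leadingCoeff, leadingCoeff, h1, h2, hA1coeff,
      hB2coeff]
    ring

lemma hlow311 : (A2 * B1).degree < 10 := by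
  calc (A2 * B1).degree ≤ 2 + 6 := degree_mul_le_of_le hA2deg hB1deg
  _ < 10 := by decide

lemma hres311 : res311.degree = 10 ∧ res311.leadingCoeff = 2 := by
  have hd : res311.degree = 10 := by
    rw [res311, degree_sub_eq_left_of_degree_lt (by rw [hmul311.1]; exact hlow311), hmul311.1]
  refine ⟨hd, ?_⟩
  have hn : res311.natDegree = 10 := natDegree_eq_of_degree_eq_some hd
  rw [leadingCoeff, hn, res311, coeff_sub, coeff_eq_zero_of_degree_lt hlow311, hmul311.2]
  ring

/-- the resultant has degree exactly 10 in `z` with leading coefficient the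
constant `2`; consequently for any commutative ring `S`, ring homomorphism `R → S` and
elements `z, w` of `S` with `ρ1(z,w) = 0` and `ρ2(z,w) = 0`, `z` is a root of the resulting
degree-10 polynomial. -/
theorem stmt_3 :
    res311.degree = 10 ∧ res311.leadingCoeff = 2 ∧
    ∀ (S : Type*) [CommRing S] (φ : MvPolynomial (Fin 30) ℤ →+* S) (z w : S),
      (φ (MvPolynomial.X 10) * z ^ 6 + φ (MvPolynomial.X 8) * z ^ 5
          + φ (MvPolynomial.X 6) * z ^ 4 + (φ (MvPolynomial.X 4) - w) * z ^ 3
          + (φ (MvPolynomial.X 9) * w + φ (MvPolynomial.X 3)) * z ^ 2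
          + (φ (MvPolynomial.X 7) * w + φ (MvPolynomial.X 2)) * z
          + φ (MvPolynomial.X 5) * w + φ (MvPolynomial.X 1) = 0) →
      (-2 * z ^ 7 + (φ (MvPolynomial.X 9) - φ (MvPolynomial.X 29) - φ (MvPolynomial.X 0)) * z ^ 6
          + (φ (MvPolynomial.X 18) - φ (MvPolynomial.X 27)) * z ^ 5
          + (φ (MvPolynomial.X 16) - φ (MvPolynomial.X 25)) * z ^ 4
          + (φ (MvPolynomial.X 14) - φ (MvPolynomial.X 23)) * z ^ 3
          + (φ (MvPolynomial.X 19) * w + φ (MvPolynomial.X 13) - φ (MvPolynomial.X 28) * w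
              - φ (MvPolynomial.X 22)) * z ^ 2
          + (φ (MvPolynomial.X 17) * w + φ (MvPolynomial.X 12) - φ (MvPolynomial.X 26) * w
              - φ (MvPolynomial.X 21)) * z
          + φ (MvPolynomial.X 11) - φ (MvPolynomial.X 20)
          - φ (MvPolynomial.X 24) * w + φ (MvPolynomial.X 15) * w = 0) →
      Polynomial.eval₂ φ z res311 = 0 := by
  refine ⟨hres311.1, hres311.2, ?_⟩
  intro S _ φ z w h1 h2
  simp only [res311, A1, A2, B1, B2, v, eval₂_add, eval₂_sub, eval₂_mul, eval₂_neg,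
    eval₂_pow, eval₂_X, eval₂_C, eval₂_ofNat]
  linear_combination
    (-z ^ 3 + φ (MvPolynomial.X 9) * z ^ 2 + φ (MvPolynomial.X 7) * z + φ (MvPolynomial.X 5)) * h2
    - ((φ (MvPolynomial.X 19) - φ (MvPolynomial.X 28)) * z ^ 2
        + (φ (MvPolynomial.X 17) - φ (MvPolynomial.X 26)) * z
        + (φ (MvPolynomial.X 15) - φ (MvPolynomial.X 24))) * h1
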